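/- Fix k ≥ 2 distinct reals t₁ < ⋯ < t_k and positive reals β₁,…,β_k. For distinct infinite sequences u, u' ∈ {1,…,k}^ℕ, define ψ_{u,u'}(λ) = ∑_{n=0}^∞ (λ^{β_{u_1}+⋯+β_{u_n}} t_{u_{n+1}} − λ^{β_{u'_1}+⋯+β_{u'_n}} t_{u'_{n+1}}) for λ ∈ (0,1). Then ψ_{u,u'} is not identically zero on (0,1). -/

import Mathlib

set_option maxHeartbeats 1000000


/-- For distinct sequences `u ≠ u'` in `{1,…,k}^ℕ`, the function
`ψ_{u,u'}(λ) = ∑ₙ (λ^{β_{u_1}+⋯+β_{u_n}} t_{u_{n+1}} − λ^{β_{u'_1}+⋯+β_{u'_n}} t_{u'_{n+1}})`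
is not identically zero on `(0,1)`. -/
theorem psi_not_identically_zero (k : ℕ) (hk : 2 ≤ k)
    (t : Fin k → ℝ) (ht : StrictMono t)
    (β : Fin k → ℝ) (hβ : ∀ i, 0 < β i)
    (u u' : ℕ → Fin k) (huu' : u ≠ u') :
    ∃ lam : ℝ, lam ∈ Set.Ioo (0 : ℝ) 1 ∧
      (∑' n : ℕ,
        (lam ^ (∑ j ∈ Finset.range n, β (u j)) * t (u n)
          - lam ^ (∑ j ∈ Finset.range n, β (u' j)) * t (u' n))) ≠ 0 := by
  classical
  have hne : ∃ n, u n ≠ u' n := by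
    by_contra h; push_neg at h; exact huu' (funext h)
  set m := Nat.find hne with hm_def
  have hm : u m ≠ u' m := Nat.find_spec hne
  have hlt : ∀ j, j < m → u j = u' j := by
    intro j hj
    have := Nat.find_min hne hj
    simpa using this
  have hk0 : 0 < k := by omega
  haveI : Nonempty (Fin k) := ⟨⟨0, hk0⟩⟩
  obtain ⟨i0⟩ : Nonempty (Fin k) := inferInstance
  set b := Finset.univ.inf' Finset.univ_nonempty β with hb_def
  have hb_pos : 0 < b := by
    rw [hb_def, Finset.lt_inf'_iff]
    exact fun i _ => hβ i
  have hb_le : ∀ i, b ≤ β i := fun i => Finset.inf'_le _ (Finset.mem_univ i)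
  set M := Finset.univ.sup' Finset.univ_nonempty (fun i => |t i|) with hM_def
  have hM : ∀ i, |t i| ≤ M := fun i => Finset.le_sup' (fun i => |t i|) (Finset.mem_univ i)
  have hM0 : 0 ≤ M := le_trans (abs_nonneg _) (hM i0)
  set Δ := t (u m) - t (u' m) with hΔ_def
  have hΔ : Δ ≠ 0 := sub_ne_zero.2 fun h => hm (ht.injective h)
  have hΔ0 : 0 < |Δ| := abs_pos.2 hΔ
  set ε := |Δ| / (2 * M + |Δ| + 1) with hε_def
  have hD0 : (0:ℝ) < 2 * M + |Δ| + 1 := by linarith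
  have hε0 : 0 < ε := div_pos hΔ0 hD0
  have hε1 : ε < 1 := (div_lt_one hD0).2 (by linarith)
  set lam := ε ^ (1 / b) with hlam_def
  have hlam0 : 0 < lam := Real.rpow_pos_of_pos hε0 _
  have hlam1 : lam < 1 := Real.rpow_lt_one hε0.le hε1 (by positivity)
  have hlamb : lam ^ b = ε := by
    rw [hlam_def, ← Real.rpow_mul hε0.le, one_div, inv_mul_cancel₀ hb_pos.ne',
      Real.rpow_one]
  clear_value b M Δ ε lam
  refine ⟨lam, ⟨hlam0, hlam1⟩, ?_⟩
  set f : ℕ → ℝ := fun n =>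
    lam ^ (∑ j ∈ Finset.range n, β (u j)) * t (u n)
      - lam ^ (∑ j ∈ Finset.range n, β (u' j)) * t (u' n) with hf_def
  show (∑' n, f n) ≠ 0
  -- basic positivity of rpow
  have hrpos : ∀ x : ℝ, 0 < lam ^ x := fun x => Real.rpow_pos_of_pos hlam0 x
  -- generic bound: lam ^ (sum over range n) ≤ ε ^ n
  have hgen : ∀ (w : ℕ → Fin k) (n : ℕ),
      lam ^ (∑ j ∈ Finset.range n, β (w j)) ≤ ε ^ n := by
    intro w n
    have h1 : (n : ℝ) * b ≤ ∑ j ∈ Finset.range n, β (w j) := by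
      have := Finset.card_nsmul_le_sum (Finset.range n) (fun j => β (w j)) b
        (fun i _ => hb_le _)
      simpa [nsmul_eq_mul] using this
    calc lam ^ (∑ j ∈ Finset.range n, β (w j)) ≤ lam ^ ((n : ℝ) * b) :=
          Real.rpow_le_rpow_of_exponent_ge hlam0 hlam1.le h1
      _ = ε ^ n := by
          rw [mul_comm, Real.rpow_mul hlam0.le, hlamb, Real.rpow_natCast]
  -- termwise bound
  have hterm : ∀ n, ‖f n‖ ≤ 2 * M * ε ^ n := by
    intro n
    have h1 : |lam ^ (∑ j ∈ Finset.range n, β (u j)) * t (u n)| ≤ M * ε ^ n := by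
      rw [abs_mul, abs_of_pos (hrpos _)]
      calc lam ^ (∑ j ∈ Finset.range n, β (u j)) * |t (u n)|
          ≤ ε ^ n * M := by
            apply mul_le_mul (hgen u n) (hM _) (abs_nonneg _) (by positivity)
        _ = M * ε ^ n := mul_comm _ _
    have h2 : |lam ^ (∑ j ∈ Finset.range n, β (u' j)) * t (u' n)| ≤ M * ε ^ n := by
      rw [abs_mul, abs_of_pos (hrpos _)]
      calc lam ^ (∑ j ∈ Finset.range n, β (u' j)) * |t (u' n)|
          ≤ ε ^ n * M := by
            apply mul_le_mul (hgen u' n) (hM _) (abs_nonneg _) (by positivity)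
        _ = M * ε ^ n := mul_comm _ _
    calc ‖f n‖ ≤ |lam ^ (∑ j ∈ Finset.range n, β (u j)) * t (u n)|
          + |lam ^ (∑ j ∈ Finset.range n, β (u' j)) * t (u' n)| := abs_sub _ _
      _ ≤ M * ε ^ n + M * ε ^ n := add_le_add h1 h2
      _ = 2 * M * ε ^ n := by ring
  have hsummable : Summable f := by
    refine Summable.of_norm_bounded (g := fun n => 2 * M * ε ^ n)
      (((summable_geometric_of_lt_one hε0.le hε1).mul_left _)) hterm
  -- prefix equality
  have hSeq : ∀ n, n ≤ m →
      (∑ j ∈ Finset.range n, β (u j)) = ∑ j ∈ Finset.range n, β (u' j) := by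
    intro n hn
    refine Finset.sum_congr rfl fun j hj => ?_
    rw [hlt j (lt_of_lt_of_le (Finset.mem_range.1 hj) hn)]
  set s := ∑ j ∈ Finset.range m, β (u j) with hs_def
  -- head
  have hhead : (∑ n ∈ Finset.range (m + 1), f n) = lam ^ s * Δ := by
    rw [Finset.sum_range_succ]
    have h0 : (∑ n ∈ Finset.range m, f n) = 0 := by
      refine Finset.sum_eq_zero fun n hn => ?_
      have hn' := Finset.mem_range.1 hn
      simp only [hf_def]
      rw [hlt n hn', hSeq n hn'.le, sub_self]
    rw [h0, zero_add]
    simp only [hf_def]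
    rw [← hSeq m le_rfl, ← hs_def, hΔ_def]
    ring
  -- tail bound
  have htail_term : ∀ (w : ℕ → Fin k) (i : ℕ),
      lam ^ (∑ j ∈ Finset.range (i + (m + 1)), β (w j))
        ≤ lam ^ (∑ j ∈ Finset.range m, β (w j)) * ε ^ (i + 1) := by
    intro w i
    have hsplit : (∑ j ∈ Finset.range (i + (m + 1)), β (w j))
        = (∑ j ∈ Finset.range m, β (w j))
          + ∑ j ∈ Finset.range (i + 1), β (w (m + j)) := by
      have : i + (m + 1) = m + (i + 1) := by omega
      rw [this, Finset.sum_range_add]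
    have h1 : ((i : ℝ) + 1) * b ≤ ∑ j ∈ Finset.range (i + 1), β (w (m + j)) := by
      have := Finset.card_nsmul_le_sum (Finset.range (i + 1))
        (fun j => β (w (m + j))) b (fun x _ => hb_le _)
      have h2 : ((i + 1 : ℕ) : ℝ) * b ≤ ∑ j ∈ Finset.range (i + 1), β (w (m + j)) := by
        simpa [nsmul_eq_mul] using this
      push_cast at h2
      linarith
    rw [hsplit, Real.rpow_add hlam0]
    apply mul_le_mul_of_nonneg_left _ (hrpos _).le
    calc lam ^ (∑ j ∈ Finset.range (i + 1), β (w (m + j)))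
        ≤ lam ^ (((i : ℝ) + 1) * b) :=
          Real.rpow_le_rpow_of_exponent_ge hlam0 hlam1.le h1
      _ = ε ^ (i + 1) := by
          rw [mul_comm, Real.rpow_mul hlam0.le, hlamb]
          rw [show ((i : ℝ) + 1) = ((i + 1 : ℕ) : ℝ) by push_cast; ring,
            Real.rpow_natCast]
  set C := 2 * M * lam ^ s * ε with hC_def
  have hC0 : 0 ≤ C := by
    have := (hrpos s).le
    positivity
  have htail_bound : ∀ i : ℕ, ‖f (i + (m + 1))‖ ≤ C * ε ^ i := by
    intro i
    have h1 : |lam ^ (∑ j ∈ Finset.range (i + (m + 1)), β (u j)) * t (u (i + (m + 1)))|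
        ≤ M * (lam ^ s * ε ^ (i + 1)) := by
      rw [abs_mul, abs_of_pos (hrpos _)]
      have := htail_term u i
      rw [← hs_def] at this
      calc lam ^ (∑ j ∈ Finset.range (i + (m + 1)), β (u j)) * |t (u (i + (m + 1)))|
          ≤ (lam ^ s * ε ^ (i + 1)) * M := by
            apply mul_le_mul this (hM _) (abs_nonneg _)
            have := (hrpos s).le
            positivity
        _ = M * (lam ^ s * ε ^ (i + 1)) := mul_comm _ _
    have h2 : |lam ^ (∑ j ∈ Finset.range (i + (m + 1)), β (u' j)) * t (u' (i + (m + 1)))|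
        ≤ M * (lam ^ s * ε ^ (i + 1)) := by
      rw [abs_mul, abs_of_pos (hrpos _)]
      have := htail_term u' i
      rw [← hSeq m le_rfl, ← hs_def] at this
      calc lam ^ (∑ j ∈ Finset.range (i + (m + 1)), β (u' j)) * |t (u' (i + (m + 1)))|
          ≤ (lam ^ s * ε ^ (i + 1)) * M := by
            apply mul_le_mul this (hM _) (abs_nonneg _)
            have := (hrpos s).le
            positivity
        _ = M * (lam ^ s * ε ^ (i + 1)) := mul_comm _ _
    calc ‖f (i + (m + 1))‖
        ≤ |lam ^ (∑ j ∈ Finset.range (i + (m + 1)), β (u j)) * t (u (i + (m + 1)))|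
          + |lam ^ (∑ j ∈ Finset.range (i + (m + 1)), β (u' j)) * t (u' (i + (m + 1)))| :=
          abs_sub _ _
      _ ≤ M * (lam ^ s * ε ^ (i + 1)) + M * (lam ^ s * ε ^ (i + 1)) := add_le_add h1 h2
      _ = C * ε ^ i := by rw [hC_def]; ring
  have hgeo : HasSum (fun i : ℕ => C * ε ^ i) (C * (1 - ε)⁻¹) :=
    (hasSum_geometric_of_lt_one hε0.le hε1).mul_left C
  have htail : ‖∑' i : ℕ, f (i + (m + 1))‖ ≤ C * (1 - ε)⁻¹ :=
    tsum_of_norm_bounded hgeo htail_bound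
  have hsplit := Summable.sum_add_tsum_nat_add (m + 1) hsummable
  -- final arithmetic
  have h1ε : 0 < 1 - ε := by linarith
  have hkey : C * (1 - ε)⁻¹ < lam ^ s * |Δ| := by
    rw [hC_def]
    rw [mul_comm (2 * M) (lam ^ s), mul_assoc, mul_assoc]
    have hls := hrpos s
    have h2 : 2 * M * ε * (1 - ε)⁻¹ < |Δ| := by
      have hεval : ε * (2 * M + |Δ| + 1) = |Δ| := by
        rw [hε_def]; field_simp
      have h3 : 2 * M * ε < |Δ| * (1 - ε) := by nlinarith [hΔ0, hM0, hε0]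
      calc 2 * M * ε * (1 - ε)⁻¹ = (2 * M * ε) / (1 - ε) := by rw [div_eq_mul_inv]
        _ < |Δ| := (div_lt_iff₀ h1ε).2 (by linarith)
    calc lam ^ s * (2 * M * (ε * (1 - ε)⁻¹)) = lam ^ s * (2 * M * ε * (1 - ε)⁻¹) := by ring
      _ < lam ^ s * |Δ| := by
          apply mul_lt_mul_of_pos_left _ hls
          exact h2
  intro hzero
  rw [← hsplit, hhead] at hzero
  have habs : |lam ^ s * Δ| ≤ ‖∑' i : ℕ, f (i + (m + 1))‖ := by
    have : lam ^ s * Δ = -(∑' i : ℕ, f (i + (m + 1))) := by linarith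
    rw [this, abs_neg]
    rfl
  rw [abs_mul, abs_of_pos (hrpos s)] at habs
  have := lt_of_le_of_lt (le_trans habs htail) hkey
  exact lt_irrefl _ this
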